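/- If a finite simple graph G contains a subgraph isomorphic to the complete graph K_k for some k ≥ 4, then the sequence (χρ(S^n_G))_{n ∈ ℕ} of packing chromatic numbers of the generalized Sierpiński graphs of G is unbounded from above. -/

import Mathlib

/-- The generalized Sierpiński graph `S^n_G` of a base graph `G` on the vertex set
`[k]_0 = {0, …, k−1}`: the vertices are the words of length `n` over `[k]_0`, and two
distinct words `u, v` are adjacent iff there is an index `i` with `u j = v j` for `j < i`,
`u i` adjacent to `v i` in `G`, and `u j = v i`, `v j = u i` for all `j > i`. -/
def genSierpinski {k : ℕ} (G : SimpleGraph (Fin k)) (n : ℕ) :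
    SimpleGraph (Fin n → Fin k) where
  Adj u v := ∃ i : Fin n,
    (∀ j, j < i → u j = v j) ∧ G.Adj (u i) (v i) ∧ ∀ j, i < j → u j = v i ∧ v j = u i
  symm := by
    constructor
    rintro u v ⟨i, h1, h2, h3⟩
    exact ⟨i, fun j hj => (h1 j hj).symm, h2.symm, fun j hj => ⟨(h3 j hj).2, (h3 j hj).1⟩⟩
  loopless := by
    constructor
    rintro u ⟨i, -, h2, -⟩
    exact G.irrefl h2

/-- The Sierpiński graph `S^n_k`, i.e. the generalized Sierpiński graph of the complete
graph `K_k` on `[k]_0` (in which two vertices are adjacent iff they are distinct). -/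
def sierpinski (k n : ℕ) : SimpleGraph (Fin n → Fin k) :=
  genSierpinski (⊤ : SimpleGraph (Fin k)) n

/-- `c` is a `t`-packing coloring of `G`: every vertex gets a color in `{1, …, t}`, and any
two distinct vertices with the same color `i` are at distance greater than `i`
(equivalently, every walk between them has length greater than `i`). -/
def IsPackingColoring {V : Type*} (G : SimpleGraph V) (t : ℕ) (c : V → ℕ) : Prop :=
  (∀ v, 1 ≤ c v ∧ c v ≤ t) ∧
    ∀ u v, u ≠ v → c u = c v → ∀ p : G.Walk u v, c u < p.length

/-- The packing chromatic number `χρ(G)`: the least `t` such that `G` admits a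
`t`-packing coloring. -/
noncomputable def packingChromatic {V : Type*} (G : SimpleGraph V) : ℕ :=
  sInf {t | ∃ c : V → ℕ, IsPackingColoring G t c}

/-- Within a "level-`r` block" of the generalized Sierpiński graph (vertices with
coordinates in a clique, agreeing on the first `n - r` coordinates), there is a walk of
length at most `2^r - 1`. -/
lemma genSierpinski_walk {m : ℕ} (G : SimpleGraph (Fin m)) (g : Fin 4 → Fin m)
    (gadj : ∀ a b : Fin 4, a ≠ b → G.Adj (g a) (g b)) (n : ℕ) :
    ∀ r : ℕ, ∀ u v : Fin n → Fin 4, (∀ j : Fin n, (j : ℕ) < n - r → u j = v j) →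
      ∃ p : (genSierpinski G n).Walk (g ∘ u) (g ∘ v), p.length ≤ 2 ^ r - 1 := by
  intro r
  induction r with
  | zero =>
    intro u v h
    have huv : u = v := funext fun j => h j (by omega)
    subst huv
    exact ⟨SimpleGraph.Walk.nil, by simp⟩
  | succ r ih =>
    intro u v h
    by_cases h' : ∀ j : Fin n, (j : ℕ) < n - r → u j = v j
    · obtain ⟨p, hp⟩ := ih u v h'
      refine ⟨p, le_trans hp ?_⟩
      have : (2:ℕ) ^ r ≤ 2 ^ (r+1) := Nat.pow_le_pow_right (by norm_num) (by omega)
      omega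
    · push_neg at h'
      obtain ⟨j, hjlt, hjne⟩ := h'
      have hjge : ¬ ((j : ℕ) < n - (r+1)) := fun hc => hjne (h j hc)
      have hjval : (j : ℕ) = n - (r+1) := by omega
      classical
      set u' : Fin n → Fin 4 := fun j' => if j' ≤ j then u j' else v j with hu'
      set v' : Fin n → Fin 4 := fun j' => if j' ≤ j then v j' else u j with hv'
      have hadj : (genSierpinski G n).Adj (g ∘ u') (g ∘ v') := by
        refine ⟨j, ?_, ?_, ?_⟩
        · intro j' hj'
          have hle : j' ≤ j := le_of_lt hj'
          have : u j' = v j' := h j' (by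
            have : (j' : ℕ) < (j : ℕ) := hj'
            omega)
          simp only [Function.comp_apply, hu', hv', if_pos hle, this]
        · have : u' j = u j := by simp [hu']
          have h2 : v' j = v j := by simp [hv']
          simp only [Function.comp_apply, this, h2]
          exact gadj _ _ hjne
        · intro j' hj'
          have hnle : ¬ (j' ≤ j) := not_le_of_gt hj'
          constructor
          · simp only [Function.comp_apply, hu', hv', if_neg hnle, if_pos (le_refl j)]
          · simp only [Function.comp_apply, hu', hv', if_neg hnle, if_pos (le_refl j)]
      have hagr1 : ∀ j' : Fin n, (j' : ℕ) < n - r → u j' = u' j' := by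
        intro j' hj'
        have : j' ≤ j := by
          have : (j' : ℕ) ≤ (j : ℕ) := by omega
          exact this
        simp [hu', if_pos this]
      have hagr2 : ∀ j' : Fin n, (j' : ℕ) < n - r → v' j' = v j' := by
        intro j' hj'
        have : j' ≤ j := by
          have : (j' : ℕ) ≤ (j : ℕ) := by omega
          exact this
        simp [hv', if_pos this]
      obtain ⟨p₁, hp₁⟩ := ih u u' hagr1
      obtain ⟨p₂, hp₂⟩ := ih v' v hagr2
      refine ⟨p₁.append (SimpleGraph.Walk.cons hadj p₂), ?_⟩
      have h1 : (2:ℕ) ^ (r+1) = 2 * 2 ^ r := by ring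
      have h2 : (1:ℕ) ≤ 2 ^ r := Nat.one_le_two_pow
      simp only [SimpleGraph.Walk.length_append, SimpleGraph.Walk.length_cons]
      omega

lemma sierpSum (n R : ℕ) (hR : R ≤ n) :
    (∑ i ∈ Finset.Ioc 0 (2 ^ (R + 1) - 2), 4 ^ (n - Nat.log 2 (i + 1))) + 2 ^ (2 * n - R)
      = 2 ^ (2 * n) := by
  induction R with
  | zero => simp
  | succ R ih =>
    have hR' : R ≤ n := by omega
    have ih' := ih hR'
    have hpow : (2:ℕ) ^ (R+1) ≤ 2 ^ (R+2) := Nat.pow_le_pow_right (by norm_num) (by omega)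
    have hp1 : (2:ℕ) ^ (R+1) = 2 * 2 ^ R := by ring
    have hp2 : (2:ℕ) ^ (R+2) = 4 * 2 ^ R := by ring
    have h2 : (2:ℕ) ≤ 2 ^ (R+1) := by
      calc (2:ℕ) = 2 ^ 1 := rfl
      _ ≤ 2 ^ (R+1) := Nat.pow_le_pow_right (by norm_num) (by omega)
    rw [← Finset.sum_Ioc_consecutive _ (Nat.zero_le (2 ^ (R+1) - 2))
      (by omega : 2 ^ (R+1) - 2 ≤ 2 ^ (R+2) - 2)]
    have hconst : ∑ i ∈ Finset.Ioc (2 ^ (R+1) - 2) (2 ^ (R+2) - 2),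
        4 ^ (n - Nat.log 2 (i + 1)) = 2 ^ (R+1) * 4 ^ (n - (R+1)) := by
      rw [Finset.sum_congr rfl (fun i hi => ?_), Finset.sum_const, Nat.card_Ioc,
        smul_eq_mul]
      · congr 1
        omega
      · rw [Finset.mem_Ioc] at hi
        congr 2
        refine Nat.log_eq_of_pow_le_of_lt_pow (by omega) (by omega)
    rw [hconst]
    have e1 : (4:ℕ) ^ (n - (R+1)) = 2 ^ (2 * (n - (R+1))) := by
      rw [show (4:ℕ) = 2 ^ 2 from rfl, ← pow_mul]
    have e2 : (2:ℕ) ^ (R+1) * 2 ^ (2 * (n - (R+1))) = 2 ^ (2 * n - (R+1)) := by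
      rw [← pow_add]
      congr 1
      omega
    have e3 : (2:ℕ) ^ (2 * n - R) = 2 * 2 ^ (2 * n - (R+1)) := by
      rw [← pow_succ']
      congr 1
      omega
    rw [e1, e2]
    omega

/-- If a graph `G` contains a subgraph isomorphic to `K_k` for some `k ≥ 4`, then the
sequence `(χρ(S^n_G))_{n ∈ ℕ}` of packing chromatic numbers of the generalized
Sierpiński graphs of `G` is unbounded from above. -/
theorem packingChromatic_genSierpinski_unbounded (m k : ℕ) (hk : 4 ≤ k)
    (G : SimpleGraph (Fin m))
    (hK : ∃ f : Fin k → Fin m, Function.Injective f ∧ ∀ i j, i ≠ j → G.Adj (f i) (f j))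
    (M : ℕ) :
    ∃ n : ℕ, 1 ≤ n ∧ M < packingChromatic (genSierpinski G n) := by
  classical
  obtain ⟨f, hfinj, hfadj⟩ := hK
  set n := M + 1 with hn
  refine ⟨n, by omega, ?_⟩
  -- the clique of size 4
  set g : Fin 4 → Fin m := f ∘ Fin.castLE hk with hg
  have ginj : Function.Injective g := hfinj.comp (Fin.castLE_injective hk)
  have gadj : ∀ a b : Fin 4, a ≠ b → G.Adj (g a) (g b) := by
    intro a b hab
    exact hfadj _ _ (fun h => hab (Fin.castLE_injective hk h))
  -- the set of admissible t's is nonempty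
  have hSne : {t | ∃ c : (Fin n → Fin m) → ℕ,
      IsPackingColoring (genSierpinski G n) t c}.Nonempty := by
    exact ⟨Fintype.card (Fin n → Fin m),
      fun v => (Fintype.equivFin (Fin n → Fin m) v : ℕ) + 1,
      fun v => ⟨Nat.le_add_left 1 _, (Fintype.equivFin (Fin n → Fin m) v).isLt⟩,
      fun u v huv hcuv _ => absurd
        ((Fintype.equivFin (Fin n → Fin m)).injective (Fin.ext (Nat.succ_injective hcuv)))
        huv⟩
  by_contra hcon
  push_neg at hcon
  have hmem := Nat.sInf_mem hSne
  obtain ⟨c, hc⟩ := hmem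
  have hle : ∀ v, 1 ≤ c v ∧ c v ≤ M := fun v =>
    ⟨(hc.1 v).1, le_trans (hc.1 v).2 hcon⟩
  -- fiber counting
  have fiber_bound : ∀ i ∈ Finset.Icc 1 M,
      (Finset.univ.filter (fun u : Fin n → Fin 4 => c (g ∘ u) = i)).card
        ≤ 4 ^ (n - Nat.log 2 (i + 1)) := by
    intro i hi
    rw [Finset.mem_Icc] at hi
    set r := Nat.log 2 (i + 1) with hr
    have hri : 2 ^ r ≤ i + 1 := Nat.pow_log_le_self 2 (by omega)
    have hinj : Set.InjOn
        (fun (u : Fin n → Fin 4) (j : Fin (n - r)) => u (Fin.castLE (Nat.sub_le n r) j))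
        ↑(Finset.univ.filter (fun u : Fin n → Fin 4 => c (g ∘ u) = i)) := by
      intro u hu v hv heq
      simp only [Finset.coe_filter, Set.mem_setOf_eq] at hu hv
      by_contra hne
      have hagr : ∀ j : Fin n, (j : ℕ) < n - r → u j = v j := by
        intro j hj
        have := congrFun heq ⟨(j : ℕ), hj⟩
        simpa [Fin.castLE, Fin.ext_iff] using this
      obtain ⟨p, hp⟩ := genSierpinski_walk G g gadj n r u v hagr
      have hgne : g ∘ u ≠ g ∘ v := fun hgu =>
        hne (funext fun j => ginj (congrFun hgu j))
      have := hc.2 (g ∘ u) (g ∘ v) hgne (by rw [hu.2, hv.2]) p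
      rw [hu.2] at this
      omega
    calc (Finset.univ.filter (fun u : Fin n → Fin 4 => c (g ∘ u) = i)).card
        ≤ (Finset.univ : Finset (Fin (n - r) → Fin 4)).card :=
          Finset.card_le_card_of_injOn _ (fun _ _ => Finset.mem_univ _) hinj
      _ = 4 ^ (n - r) := by simp [Finset.card_univ]
  have hcard : (4:ℕ) ^ n = ∑ i ∈ Finset.Icc 1 M,
      (Finset.univ.filter (fun u : Fin n → Fin 4 => c (g ∘ u) = i)).card := by
    rw [← Finset.card_eq_sum_card_fiberwise
      (f := fun u : Fin n → Fin 4 => c (g ∘ u)) (t := Finset.Icc 1 M)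
      (fun u _ => Finset.mem_Icc.mpr (hle (g ∘ u)))]
    simp [Finset.card_univ]
  have hsum1 : ∑ i ∈ Finset.Icc 1 M,
      (Finset.univ.filter (fun u : Fin n → Fin 4 => c (g ∘ u) = i)).card
      ≤ ∑ i ∈ Finset.Icc 1 M, 4 ^ (n - Nat.log 2 (i + 1)) :=
    Finset.sum_le_sum fiber_bound
  have hsub : Finset.Icc 1 M ⊆ Finset.Ioc 0 (2 ^ (M + 1) - 2) := by
    intro i hi
    rw [Finset.mem_Icc] at hi
    rw [Finset.mem_Ioc]
    have hM : M < 2 ^ M := Nat.lt_two_pow_self (n := M)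
    have : (2:ℕ) ^ (M+1) = 2 * 2 ^ M := by ring
    omega
  have hsum2 : ∑ i ∈ Finset.Icc 1 M, 4 ^ (n - Nat.log 2 (i + 1))
      ≤ ∑ i ∈ Finset.Ioc 0 (2 ^ (M + 1) - 2), 4 ^ (n - Nat.log 2 (i + 1)) :=
    Finset.sum_le_sum_of_subset hsub
  have hkey := sierpSum n M (by omega)
  have h4n : (4:ℕ) ^ n = 2 ^ (2 * n) := by
    rw [show (4:ℕ) = 2 ^ 2 from rfl, ← pow_mul]
  have hpos : (1:ℕ) ≤ 2 ^ (2 * n - M) := Nat.one_le_two_pow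
  omega
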